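/- For Bender's Hamiltonian H = [[r e^{iθ}, s],[s, r e^{−iθ}]] with s² − r²sin²θ = 0, s ≠ 0, and sinθ ≠ 0, H is not diagonalizable. -/
import Mathlib


open Matrix

theorem bender_hamiltonian_critical_not_diagonalizable
    (r s θ : ℝ)
    (hcrit : s ^ 2 - r ^ 2 * Real.sin θ ^ 2 = 0)
    (hs : s ≠ 0) (hsin : Real.sin θ ≠ 0)
    (H : Matrix (Fin 2) (Fin 2) ℂ)
    (hH : H = !![(r : ℂ) * Complex.exp (Complex.I * θ), (s : ℂ);
                 (s : ℂ), (r : ℂ) * Complex.exp (-(Complex.I * θ))]) :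
    ¬ ∃ (Ψ : Matrix (Fin 2) (Fin 2) ℂ) (d : Fin 2 → ℂ),
        IsUnit Ψ.det ∧ Ψ⁻¹ * H * Ψ = Matrix.diagonal d := by
  rintro ⟨Ψ, d, hΨ, hdiag⟩
  have hPi : Ψ * Ψ⁻¹ = 1 := Matrix.mul_nonsing_inv Ψ hΨ
  have hiP : Ψ⁻¹ * Ψ = 1 := Matrix.nonsing_inv_mul Ψ hΨ
  set lam : ℂ := (r : ℂ) * Complex.cos (θ : ℂ) with hlam
  have hexp1 : Complex.exp (Complex.I * θ) = Complex.cos (θ : ℂ) + Complex.sin (θ : ℂ) * Complex.I := by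
    rw [mul_comm, Complex.exp_mul_I]
  have hexp2 : Complex.exp (-(Complex.I * θ)) = Complex.cos (θ : ℂ) - Complex.sin (θ : ℂ) * Complex.I := by
    rw [mul_comm, ← neg_mul, Complex.exp_mul_I, Complex.cos_neg, Complex.sin_neg]
    ring
  have hcritC : (s : ℂ) ^ 2 - (r : ℂ) ^ 2 * Complex.sin (θ : ℂ) ^ 2 = 0 := by
    rw [← Complex.ofReal_sin]
    exact_mod_cast congrArg (fun x : ℝ => (x : ℂ)) hcrit
  -- (H - lam • 1) squared is zero
  have hN : (H - lam • 1) * (H - lam • 1) = 0 := by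
    subst hH
    rw [hexp1, hexp2]
    ext i j
    fin_cases i <;> fin_cases j <;>
      simp [Matrix.mul_apply, Fin.sum_univ_two, Matrix.one_apply] <;>
      first
        | ring1
        | linear_combination hcritC + (r : ℂ) ^ 2 * Complex.sin (θ : ℂ) ^ 2 * Complex.I_sq
  -- diagonal d - lam • 1 squared is zero
  have hD : (Matrix.diagonal d - lam • 1) * (Matrix.diagonal d - lam • 1) = 0 := by
    have h1 : Matrix.diagonal d - lam • 1 = Ψ⁻¹ * (H - lam • 1) * Ψ := by
      rw [Matrix.mul_sub, Matrix.sub_mul, hdiag, Matrix.mul_smul, Matrix.mul_one,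
        Matrix.smul_mul, hiP]
    rw [h1]
    have h2 : Ψ⁻¹ * (H - lam • 1) * Ψ * (Ψ⁻¹ * (H - lam • 1) * Ψ)
        = Ψ⁻¹ * ((H - lam • 1) * (H - lam • 1)) * Ψ := by
      simp only [Matrix.mul_assoc]
      rw [← Matrix.mul_assoc Ψ Ψ⁻¹, hPi, Matrix.one_mul]
    rw [h2, hN, Matrix.mul_zero, Matrix.zero_mul]
  have hsub : Matrix.diagonal d - lam • 1 = Matrix.diagonal (fun i => d i - lam) := by
    ext i j
    by_cases h : i = j <;> simp [Matrix.diagonal_apply, Matrix.one_apply, h]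
  have hd : ∀ i, d i = lam := by
    intro i
    rw [hsub, Matrix.diagonal_mul_diagonal] at hD
    have h2 : (d i - lam) * (d i - lam) = 0 := by
      have := congrFun (congrFun hD i) i
      simpa [Matrix.diagonal_apply_eq] using this
    exact sub_eq_zero.mp (mul_self_eq_zero.mp h2)
  have hdiag1 : Matrix.diagonal d = lam • (1 : Matrix (Fin 2) (Fin 2) ℂ) := by
    ext i j
    by_cases h : i = j <;>
      simp [Matrix.diagonal, Matrix.one_apply, h, hd]
  have hH1 : H = lam • 1 := by
    have : Ψ * (Ψ⁻¹ * H * Ψ) * Ψ⁻¹ = Ψ * Matrix.diagonal d * Ψ⁻¹ := by rw [hdiag]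
    rw [← Matrix.mul_assoc, ← Matrix.mul_assoc, hPi, Matrix.one_mul, Matrix.mul_assoc,
      hPi, Matrix.mul_one, hdiag1, Matrix.mul_smul, Matrix.mul_one, Matrix.smul_mul, hPi] at this
    exact this
  have : H 0 1 = 0 := by rw [hH1]; simp [Matrix.one_apply]
  rw [hH] at this
  simp at this
  exact hs this
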